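/- arXiv:1007.4222 — 2 statements merged into one kernel-verified Lean document; each statement's English description precedes it below -/
import Mathlib

section
/- Let F ⊆ [0,1] be a generalized Cantor set constructed iteratively: F_0 = [0,1], and F_j is obtained from F_{j−1} by replacing each closed interval I by its two closed end-subintervals each of length r_j · |I|, where each ratio r_j ∈ {1/3, 1/5, 1/7}. Let L_j denote the common length of the 2^j intervals of F_j, and let F = ∩_j F_j. Then for every δ with L_j ≤ δ < L_{j−1}, the maximal number of pairwise disjoint closed balls of diameter δ with centres in F equals 2^j. -/
open Filter Topology Metric

/-- `coverNum F δ` : the smallest number of sets of diameter at most `δ` needed to cover `F`. -/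
noncomputable def coverNum {X : Type*} [MetricSpace X] (F : Set X) (δ : ℝ) : ℕ :=
  sInf {n : ℕ | ∃ U : Fin n → Set X, (∀ i, Metric.diam (U i) ≤ δ) ∧ F ⊆ ⋃ i, U i}

/-- Upper box-counting dimension. -/
noncomputable def dimB {X : Type*} [MetricSpace X] (F : Set X) : ℝ :=
  Filter.limsup (fun δ : ℝ => Real.log (coverNum F δ) / (-Real.log δ)) (nhdsWithin 0 (Set.Ioi 0))

/-- Lower box-counting dimension. -/
noncomputable def dimLB {X : Type*} [MetricSpace X] (F : Set X) : ℝ :=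
  Filter.liminf (fun δ : ℝ => Real.log (coverNum F δ) / (-Real.log δ)) (nhdsWithin 0 (Set.Ioi 0))

/-- `packNum F δ` : the largest number of pairwise disjoint closed balls of diameter `δ`
with centres in `F`. -/
noncomputable def packNum {X : Type*} [MetricSpace X] (F : Set X) (δ : ℝ) : ℕ :=
  sSup {n : ℕ | ∃ x : Fin n → X, (∀ i, x i ∈ F) ∧
    Pairwise fun i j => Disjoint (Metric.closedBall (x i) (δ/2)) (Metric.closedBall (x j) (δ/2))}

/-- The product set `F × G` viewed inside `X × Y` with the `ℓ²` (Euclidean-style) product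
metric `d((x,y),(x',y')) = √(d_X(x,x')² + d_Y(y,y')²)`. -/
noncomputable def prodSet {X Y : Type*} [MetricSpace X] [MetricSpace Y]
    (F : Set X) (G : Set Y) : Set (WithLp 2 (X × Y)) :=
  {p | (WithLp.equiv 2 (X × Y) p).1 ∈ F ∧ (WithLp.equiv 2 (X × Y) p).2 ∈ G}
/-- `cantorLen r j` : the common length `L_j = r 1 * ⋯ * r j` of the `2^j` intervals at
stage `j` of the generalized Cantor construction with ratios `r`. -/
noncomputable def cantorLen (r : ℕ → ℝ) (j : ℕ) : ℝ := ∏ i ∈ Finset.range j, r (i + 1)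

/-- Left endpoint of the stage-`j` interval with address `ε`. -/
noncomputable def cantorLeft (r : ℕ → ℝ) (j : ℕ) (ε : ℕ → Bool) : ℝ :=
  ∑ i ∈ Finset.range j, (if ε i then (1 - r (i + 1)) * cantorLen r i else 0)

/-- Stage `j` of the construction: `F_0 = [0,1]`, and `F_j` replaces each interval of
`F_{j-1}` by its two closed end-subintervals of relative length `r j`. -/
noncomputable def genCantorStage (r : ℕ → ℝ) (j : ℕ) : Set ℝ :=
  ⋃ ε : ℕ → Bool, Set.Icc (cantorLeft r j ε) (cantorLeft r j ε + cantorLen r j)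

/-- The generalized Cantor set `F = ⋂ j, F_j`. -/
noncomputable def genCantorSet (r : ℕ → ℝ) : Set ℝ := ⋂ j, genCantorStage r j

section helpers
variable {r : ℕ → ℝ}

def H01 (r : ℕ → ℝ) : Prop := ∀ i, 0 < r i ∧ r i ≤ 1/3

lemma len_pos (h01 : H01 r) (m : ℕ) : 0 < cantorLen r m :=
  Finset.prod_pos fun i _ => (h01 (i+1)).1

lemma len_succ (m : ℕ) : cantorLen r (m+1) = cantorLen r m * r (m+1) :=
  Finset.prod_range_succ _ _

lemma len_anti (h01 : H01 r) : ∀ {k m : ℕ}, k ≤ m → cantorLen r m ≤ cantorLen r k := by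
  intro k m hkm
  induction m, hkm using Nat.le_induction with
  | base => exact le_refl _
  | succ m hkm ih =>
    refine le_trans ?_ ih
    rw [len_succ]
    nlinarith [len_pos h01 m, (h01 (m+1)).1, (h01 (m+1)).2]

lemma left_succ (m : ℕ) (ε : ℕ → Bool) :
    cantorLeft r (m+1) ε = cantorLeft r m ε +
      (if ε m then (1 - r (m + 1)) * cantorLen r m else 0) :=
  Finset.sum_range_succ _ _

lemma left_congr (m : ℕ) {ε ε' : ℕ → Bool} (h : ∀ i < m, ε i = ε' i) :
    cantorLeft r m ε = cantorLeft r m ε' :=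
  Finset.sum_congr rfl fun i hi => by rw [h i (Finset.mem_range.mp hi)]

lemma Icc_nested (h01 : H01 r) : ∀ {k m : ℕ}, k ≤ m → ∀ ε : ℕ → Bool,
    Set.Icc (cantorLeft r m ε) (cantorLeft r m ε + cantorLen r m) ⊆
      Set.Icc (cantorLeft r k ε) (cantorLeft r k ε + cantorLen r k) := by
  intro k m hkm
  induction m, hkm using Nat.le_induction with
  | base => exact fun ε => subset_rfl
  | succ m hkm ih =>
    intro ε
    refine subset_trans (Set.Icc_subset_Icc ?_ ?_) (ih ε)
    · rw [left_succ]
      have := len_pos h01 m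
      have := (h01 (m+1)).2
      split <;> nlinarith
    · rw [left_succ, len_succ]
      have := len_pos h01 m
      have h1 := (h01 (m+1)).1
      have h2 := (h01 (m+1)).2
      split <;> nlinarith

lemma left_tail_false {m : ℕ} {ε : ℕ → Bool} (h : ∀ i, m ≤ i → ε i = false) :
    ∀ {k : ℕ}, m ≤ k → cantorLeft r k ε = cantorLeft r m ε := by
  intro k hmk
  induction k, hmk using Nat.le_induction with
  | base => rfl
  | succ k hmk ih => rw [left_succ, h k hmk, ih]; simp

lemma right_tail_true {m : ℕ} {ε : ℕ → Bool} (h : ∀ i, m ≤ i → ε i = true) :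
    ∀ {k : ℕ}, m ≤ k → cantorLeft r k ε + cantorLen r k = cantorLeft r m ε + cantorLen r m := by
  intro k hmk
  induction k, hmk using Nat.le_induction with
  | base => rfl
  | succ k hmk ih => rw [left_succ, h k hmk, len_succ, ← ih]; ring_nf; simp

lemma mem_genCantorSet_of_forall_stage {x : ℝ}
    (h : ∀ k, x ∈ genCantorStage r k) : x ∈ genCantorSet r :=
  Set.mem_iInter.mpr h

lemma mem_stage {x : ℝ} (k : ℕ) (ε : ℕ → Bool)
    (hx : x ∈ Set.Icc (cantorLeft r k ε) (cantorLeft r k ε + cantorLen r k)) :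
    x ∈ genCantorStage r k :=
  Set.mem_iUnion.mpr ⟨ε, hx⟩

lemma pt_left_mem (h01 : H01 r) (m : ℕ) (ε : ℕ → Bool) (htail : ∀ i, m ≤ i → ε i = false) :
    cantorLeft r m ε ∈ genCantorSet r := by
  refine mem_genCantorSet_of_forall_stage fun k => ?_
  rcases le_total k m with hk | hk
  · exact mem_stage k ε (Icc_nested h01 hk ε
      ⟨le_refl _, le_add_of_nonneg_right (len_pos h01 m).le⟩)
  · refine mem_stage k ε ?_
    rw [left_tail_false htail hk]
    exact ⟨le_refl _, le_add_of_nonneg_right (len_pos h01 k).le⟩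

lemma pt_right_mem (h01 : H01 r) (m : ℕ) (ε : ℕ → Bool) (htail : ∀ i, m ≤ i → ε i = true) :
    cantorLeft r m ε + cantorLen r m ∈ genCantorSet r := by
  refine mem_genCantorSet_of_forall_stage fun k => ?_
  rcases le_total k m with hk | hk
  · exact mem_stage k ε (Icc_nested h01 hk ε
      ⟨le_add_of_nonneg_right (len_pos h01 m).le, le_refl _⟩)
  · refine mem_stage k ε ?_
    rw [← right_tail_true htail hk]
    exact ⟨le_add_of_nonneg_right (len_pos h01 k).le, le_refl _⟩

end helpers


theorem packNum_genCantorSet (r : ℕ → ℝ)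
    (hr : ∀ j, r j = 1/3 ∨ r j = 1/5 ∨ r j = 1/7) (j : ℕ) (δ : ℝ)
    (h1 : cantorLen r (j + 1) ≤ δ) (h2 : δ < cantorLen r j) :
    packNum (genCantorSet r) δ = 2 ^ (j + 1) := by
  have h01 : H01 r := by intro i; rcases hr i with h | h | h <;> rw [h] <;> norm_num
  have hLpos := len_pos h01
  -- lifted addresses
  set b : (Fin (j+1) → Bool) → ℕ → Bool :=
    fun c i => c ⟨min i j, Nat.lt_succ_of_le (min_le_right i j)⟩ with hbdef
  have hbj : ∀ c, b c j = c ⟨j, Nat.lt_succ_self j⟩ := fun c => by simp [hbdef]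
  have hb_le : ∀ (c : Fin (j+1) → Bool) (i : ℕ) (h : i ≤ j),
      b c i = c ⟨i, Nat.lt_succ_of_le h⟩ := fun c i h => by
    simp [hbdef, Nat.min_eq_left h]
  have hb_ge : ∀ (c : Fin (j+1) → Bool) (i : ℕ), j ≤ i →
      b c i = c ⟨j, Nat.lt_succ_self j⟩ := fun c i h => by
    simp [hbdef, Nat.min_eq_right h]
  set P : (Fin (j+1) → Bool) → ℝ := fun c =>
    cantorLeft r (j+1) (b c) +
      (if c ⟨j, Nat.lt_succ_self j⟩ then cantorLen r (j+1) else 0) with hPdef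
  have hPmem : ∀ c, P c ∈ genCantorSet r := by
    intro c
    by_cases hc : c ⟨j, Nat.lt_succ_self j⟩ = true
    · have hP : P c = cantorLeft r (j+1) (b c) + cantorLen r (j+1) := by simp [hPdef, hc]
      rw [hP]
      exact pt_right_mem h01 (j+1) (b c) fun i hi => by rw [hb_ge c i (by omega), hc]
    · have hP : P c = cantorLeft r (j+1) (b c) := by simp [hPdef, hc]
      rw [hP]
      exact pt_left_mem h01 (j+1) (b c) fun i hi => by
        rw [hb_ge c i (by omega)]; simpa using hc
  -- core separation estimate
  have core : ∀ (c c' : Fin (j+1) → Bool) (k : ℕ), k ≤ j →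
      (∀ i < k, b c i = b c' i) → b c k = false → b c' k = true →
      cantorLen r j ≤ P c' - P c := by
    intro c c' k hkj hag hck hc'k
    have ha : cantorLeft r k (b c') = cantorLeft r k (b c) :=
      left_congr k fun i hi => (hag i hi).symm
    have hPc_in : P c ∈ Set.Icc (cantorLeft r (j+1) (b c))
        (cantorLeft r (j+1) (b c) + cantorLen r (j+1)) := by
      constructor
      · simp only [hPdef]
        split <;> simp [(hLpos (j+1)).le]
      · simp only [hPdef]
        split <;> simp [(hLpos (j+1)).le]
    have hPc'_in : P c' ∈ Set.Icc (cantorLeft r (j+1) (b c'))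
        (cantorLeft r (j+1) (b c') + cantorLen r (j+1)) := by
      constructor
      · simp only [hPdef]
        split <;> simp [(hLpos (j+1)).le]
      · simp only [hPdef]
        split <;> simp [(hLpos (j+1)).le]
    have h₁ := Icc_nested h01 (Nat.succ_le_succ hkj) (b c) hPc_in
    have h₂ := Icc_nested h01 (Nat.succ_le_succ hkj) (b c') hPc'_in
    rw [left_succ k (b c), hck] at h₁
    rw [left_succ k (b c'), hc'k, ha] at h₂
    simp only [if_false, if_true, add_zero, Bool.false_eq_true, ite_false, ite_true] at h₁ h₂
    rcases eq_or_lt_of_le hkj with heq | hkj'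
    · -- k = j : exact computation
      subst heq
      have hcj : c ⟨k, Nat.lt_succ_self k⟩ = false := by rw [← hbj c]; exact hck
      have hc'j : c' ⟨k, Nat.lt_succ_self k⟩ = true := by rw [← hbj c']; exact hc'k
      have e2 : cantorLeft r (k+1) (b c) = cantorLeft r k (b c) := by
        rw [left_succ k (b c), hck]; simp
      have e1 : cantorLeft r (k+1) (b c') =
          cantorLeft r k (b c) + (1 - r (k+1)) * cantorLen r k := by
        rw [left_succ k (b c'), hc'k, ha]; simp
      have hPc : P c = cantorLeft r k (b c) := by
        simp [hPdef, hcj, e2]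
      have hPc' : P c' = cantorLeft r k (b c) + cantorLen r k := by
        have h3 : P c' = cantorLeft r k (b c) + (1 - r (k+1)) * cantorLen r k
            + cantorLen r k * r (k+1) := by
          simp [hPdef, hc'j, e1, len_succ]
        rw [h3]; ring
      rw [hPc, hPc']
      linarith
    · -- k < j
      obtain ⟨hl₁, hr₁⟩ := h₁
      obtain ⟨hl₂, hr₂⟩ := h₂
      have hLk := hLpos k
      have hLle : cantorLen r j ≤ cantorLen r (k+1) := len_anti h01 hkj'
      have hr1 := (h01 (k+1)).1
      have hr2 := (h01 (k+1)).2
      rw [len_succ] at hLle hr₁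
      nlinarith
  -- symmetric separation
  have sep : ∀ c c', c ≠ c' → cantorLen r j ≤ |P c - P c'| := by
    intro c c' hne
    obtain ⟨i, hi⟩ := Function.ne_iff.mp hne
    have hij : (i : ℕ) ≤ j := Nat.lt_succ_iff.mp i.isLt
    have hbne : b c i.val ≠ b c' i.val := by
      rw [hb_le c i.val hij, hb_le c' i.val hij]
      simpa using hi
    have hex : ∃ m, b c m ≠ b c' m := ⟨i.val, hbne⟩
    have hkle : Nat.find hex ≤ j := le_trans (Nat.find_min' hex hbne) hij
    have hagree : ∀ m < Nat.find hex, b c m = b c' m := fun m hm =>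
      not_not.mp (Nat.find_min hex hm)
    have hdiff : b c (Nat.find hex) ≠ b c' (Nat.find hex) := Nat.find_spec hex
    cases hbc : b c (Nat.find hex) <;> cases hbc' : b c' (Nat.find hex)
    · rw [hbc, hbc'] at hdiff; exact absurd rfl hdiff
    · have := core c c' (Nat.find hex) hkle hagree hbc hbc'
      exact le_abs.mpr (Or.inr (by linarith))
    · have := core c' c (Nat.find hex) hkle (fun m hm => (hagree m hm).symm) hbc' hbc
      exact le_abs.mpr (Or.inl (by linarith))
    · rw [hbc, hbc'] at hdiff; exact absurd rfl hdiff
  have hcard : Fintype.card (Fin (j+1) → Bool) = 2 ^ (j+1) := by simp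
  set S : Set ℕ := {n : ℕ | ∃ x : Fin n → ℝ, (∀ i, x i ∈ genCantorSet r) ∧
    Pairwise fun i j' => Disjoint (Metric.closedBall (x i) (δ/2))
      (Metric.closedBall (x j') (δ/2))} with hSdef
  have hmem : 2 ^ (j+1) ∈ S := by
    let e : Fin (2 ^ (j+1)) ≃ (Fin (j+1) → Bool) := (Fintype.equivFinOfCardEq hcard).symm
    refine ⟨fun i => P (e i), fun i => hPmem _, fun i i' hne => ?_⟩
    apply Metric.closedBall_disjoint_closedBall
    have hne' : e i ≠ e i' := fun h => hne (e.injective h)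
    have := sep (e i) (e i') hne'
    rw [Real.dist_eq]
    linarith
  have hub : ∀ N ∈ S, N ≤ 2 ^ (j+1) := by
    rintro N ⟨x, hxF, hdisj⟩
    by_contra hN
    push_neg at hN
    have hstage : ∀ i : Fin N, ∃ ε : ℕ → Bool, x i ∈ Set.Icc (cantorLeft r (j+1) ε)
        (cantorLeft r (j+1) ε + cantorLen r (j+1)) := fun i =>
      Set.mem_iUnion.mp (Set.mem_iInter.mp (hxF i) (j+1))
    choose ε hε using hstage
    have hcard2 : Fintype.card (Fin (j+1) → Bool) < Fintype.card (Fin N) := by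
      rw [hcard, Fintype.card_fin]; exact hN
    obtain ⟨i, i', hne, heq⟩ :=
      Fintype.exists_ne_map_eq_of_card_lt (fun i (m : Fin (j+1)) => ε i m.val) hcard2
    have hleq : cantorLeft r (j+1) (ε i) = cantorLeft r (j+1) (ε i') :=
      left_congr _ fun m hm => congrFun heq ⟨m, hm⟩
    have h₁ := hε i
    have h₂ := hε i'
    rw [hleq] at h₁
    have hdist : |x i - x i'| ≤ δ := by
      rw [abs_sub_le_iff]
      constructor <;> [linarith [h₁.1, h₁.2, h₂.1, h₂.2]; linarith [h₁.1, h₁.2, h₂.1, h₂.2]]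
    have hmid1 : (x i + x i') / 2 ∈ Metric.closedBall (x i) (δ/2) := by
      rw [Metric.mem_closedBall, Real.dist_eq,
        show (x i + x i') / 2 - x i = (x i' - x i) / 2 by ring, abs_div]
      rw [abs_sub_comm] at hdist
      rw [show |(2:ℝ)| = 2 by norm_num]
      linarith
    have hmid2 : (x i + x i') / 2 ∈ Metric.closedBall (x i') (δ/2) := by
      rw [Metric.mem_closedBall, Real.dist_eq,
        show (x i + x i') / 2 - x i' = (x i - x i') / 2 by ring, abs_div]
      rw [show |(2:ℝ)| = 2 by norm_num]
      linarith
    exact Set.disjoint_left.mp (hdisj hne) hmid1 hmid2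
  have hpack : packNum (genCantorSet r) δ = sSup S := rfl
  rw [hpack]
  exact le_antisymm (csSup_le' hub) (le_csSup ⟨2 ^ (j+1), hub⟩ hmem)
end

section
/- Let K_j = 10^(2^j), and define f_3(j) = Σ_{n≥0} |{i : K_{6n} < i ≤ min(j, K_{6n+1})}| (the number of stages up to j at which ratio 1/3 was applied in the construction of F). Then f_3(K_{6n+1})/K_{6n+1} → 1 as n → ∞, while f_3(K_{6n+l})/K_{6n+l} → 0 as n → ∞ for each l ∈ {0,2,3,4,5}. -/
open Filter Topology

/-- The doubly exponential sequence `K j = 10 ^ (2 ^ j)`. -/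
def K (j : ℕ) : ℕ := 10 ^ (2 ^ j)

open scoped Classical in
/-- `f3 j` : the number of stages `i ≤ j` lying in some interval `(K (6n), K (6n+1)]`,
i.e. at which the ratio `1/3` is applied in the construction of `F`. -/
noncomputable def f3 (j : ℕ) : ℕ :=
  ((Finset.range (j + 1)).filter fun i => ∃ n : ℕ, K (6 * n) < i ∧ i ≤ K (6 * n + 1)).card

open scoped Classical in
/-- `f7 j` : the number of stages `i ≤ j` lying in some interval `(K (6n+1), K (6n+2)]`. -/
noncomputable def f7 (j : ℕ) : ℕ :=
  ((Finset.range (j + 1)).filter fun i => ∃ n : ℕ, K (6 * n + 1) < i ∧ i ≤ K (6 * n + 2)).card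

open scoped Classical in
/-- `g3 j` : the number of stages `i ≤ j` lying in some interval `(K (6m+3), K (6m+4)]`. -/
noncomputable def g3 (j : ℕ) : ℕ :=
  ((Finset.range (j + 1)).filter fun i => ∃ m : ℕ, K (6 * m + 3) < i ∧ i ≤ K (6 * m + 4)).card

open scoped Classical in
/-- `g7 j` : the number of stages `i ≤ j` lying in some interval `(K (6m+4), K (6m+5)]`. -/
noncomputable def g7 (j : ℕ) : ℕ :=
  ((Finset.range (j + 1)).filter fun i => ∃ m : ℕ, K (6 * m + 4) < i ∧ i ≤ K (6 * m + 5)).card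

/-! ### Auxiliary lemmas -/

lemma K_strictMono : StrictMono K := fun a b h => by
  unfold K
  exact Nat.pow_lt_pow_right (by norm_num) (Nat.pow_lt_pow_right (by norm_num) h)

lemma K_pos (j : ℕ) : 0 < K j := pow_pos (by norm_num) _

lemma K_succ (j : ℕ) : K (j + 1) = K j ^ 2 := by unfold K; rw [pow_succ 2 j, pow_mul]

lemma K_cast_pos (j : ℕ) : (0:ℝ) < (K j : ℝ) := by exact_mod_cast K_pos j

lemma K_sq_le {a b : ℕ} (h : a < b) : (K a : ℝ) * (K a : ℝ) ≤ (K b : ℝ) := by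
  have h1 : K a * K a ≤ K b := by
    have : K (a+1) ≤ K b := K_strictMono.monotone h
    rw [K_succ, sq] at this
    exact this
  exact_mod_cast h1

lemma one_div_K_tendsto {b : ℕ → ℕ} (hb : Tendsto b atTop atTop) :
    Tendsto (fun n => 1 / (K (b n) : ℝ)) atTop (nhds 0) := by
  have h1 : Tendsto (fun n => (K (b n) : ℝ)) atTop atTop :=
    tendsto_natCast_atTop_atTop.comp (K_strictMono.tendsto_atTop.comp hb)
  have h2 : Tendsto (fun n => ((K (b n) : ℝ))⁻¹) atTop (nhds 0) := h1.inv_tendsto_atTop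
  simpa only [one_div] using h2

lemma f3_upper {j B : ℕ} (h : ∀ i m, i ≤ j → K (6*m) < i → i ≤ K (6*m+1) → i ≤ B) :
    f3 j ≤ B := by
  classical
  unfold f3
  calc ((Finset.range (j + 1)).filter fun i => ∃ n : ℕ, K (6 * n) < i ∧ i ≤ K (6 * n + 1)).card
      ≤ (Finset.Ioc 0 B).card := Finset.card_le_card ?_
    _ = B := by simp
  intro i hi
  simp only [Finset.mem_filter, Finset.mem_range] at hi
  obtain ⟨hij, m, h1, h2⟩ := hi
  exact Finset.mem_Ioc.mpr ⟨lt_of_le_of_lt (Nat.zero_le _) h1,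
    h i m (Nat.lt_succ_iff.mp hij) h1 h2⟩

lemma f3_le (j : ℕ) : f3 j ≤ j := f3_upper fun _ _ hij _ _ => hij

lemma f3_lower (n : ℕ) : K (6*n+1) - K (6*n) ≤ f3 (K (6*n+1)) := by
  classical
  unfold f3
  have h : Finset.Ioc (K (6*n)) (K (6*n+1)) ⊆
      (Finset.range (K (6*n+1) + 1)).filter fun i => ∃ m, K (6*m) < i ∧ i ≤ K (6*m+1) := by
    intro i hi
    simp only [Finset.mem_Ioc] at hi
    simp only [Finset.mem_filter, Finset.mem_range]
    exact ⟨Nat.lt_succ_of_le hi.2, n, hi.1, hi.2⟩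
  have := Finset.card_le_card h
  simpa using this

lemma f3_K_upper {n l : ℕ} (h2 : 1 ≤ l) (h5 : l ≤ 5) : f3 (K (6*n+l)) ≤ K (6*n+1) := by
  apply f3_upper
  intro i m hij h1 h2'
  rcases le_or_gt m n with hm | hm
  · exact h2'.trans (K_strictMono.monotone (by omega))
  · exfalso
    have : K (6*n+l) < K (6*m) := K_strictMono (by omega)
    omega

lemma f3_K_upper0 (n : ℕ) : f3 (K (6*(n+1))) ≤ K (6*n+1) := by
  apply f3_upper
  intro i m hij h1 h2'
  rcases le_or_gt m n with hm | hm
  · exact h2'.trans (K_strictMono.monotone (by omega))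
  · exfalso
    have : K (6*(n+1)) ≤ K (6*m) := K_strictMono.monotone (by omega)
    omega

/-- Generic zero-limit lemma. -/
lemma tendsto_zero_of_bounds {b c : ℕ → ℕ} (hb : Tendsto b atTop atTop)
    (h : ∀ᶠ n in atTop, b n < c n ∧ f3 (K (c n)) ≤ K (b n)) :
    Tendsto (fun n => (f3 (K (c n)) : ℝ) / (K (c n) : ℝ)) atTop (nhds 0) := by
  apply tendsto_of_tendsto_of_tendsto_of_le_of_le' tendsto_const_nhds (one_div_K_tendsto hb)
  · exact Eventually.of_forall fun n =>
      div_nonneg (Nat.cast_nonneg _) (Nat.cast_nonneg _)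
  · filter_upwards [h] with n hn
    obtain ⟨hbc, hf⟩ := hn
    rw [div_le_div_iff₀ (K_cast_pos _) (K_cast_pos _), one_mul]
    calc (f3 (K (c n)) : ℝ) * (K (b n) : ℝ)
        ≤ (K (b n) : ℝ) * (K (b n) : ℝ) := by
          apply mul_le_mul_of_nonneg_right _ (Nat.cast_nonneg _)
          exact_mod_cast hf
      _ ≤ (K (c n) : ℝ) := K_sq_le hbc

lemma part1 : Tendsto (fun n : ℕ => (f3 (K (6 * n + 1)) : ℝ) / (K (6 * n + 1) : ℝ))
    atTop (nhds 1) := by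
  have hlow : ∀ n : ℕ, 1 - 1 / (K (6*n) : ℝ) ≤ (f3 (K (6*n+1)) : ℝ) / (K (6*n+1) : ℝ) := by
    intro n
    have hKle : K (6*n) ≤ K (6*n+1) := (K_strictMono (by omega)).le
    have h1 : ((K (6*n+1) - K (6*n) : ℕ) : ℝ) ≤ (f3 (K (6*n+1)) : ℝ) := by
      exact_mod_cast f3_lower n
    rw [Nat.cast_sub hKle] at h1
    have h2 : (1 : ℝ) - (K (6*n) : ℝ) / (K (6*n+1) : ℝ)
        ≤ (f3 (K (6*n+1)) : ℝ) / (K (6*n+1) : ℝ) := by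
      have heq : (1 : ℝ) - (K (6*n) : ℝ) / (K (6*n+1) : ℝ)
          = ((K (6*n+1) : ℝ) - (K (6*n) : ℝ)) / (K (6*n+1) : ℝ) := by
        rw [sub_div, div_self (K_cast_pos (6*n+1)).ne']
      rw [heq]
      gcongr
    have h3 : (K (6*n) : ℝ) / (K (6*n+1) : ℝ) ≤ 1 / (K (6*n) : ℝ) := by
      rw [div_le_div_iff₀ (K_cast_pos _) (K_cast_pos _), one_mul]
      exact K_sq_le (by omega)
    linarith
  have hhigh : ∀ n : ℕ, (f3 (K (6*n+1)) : ℝ) / (K (6*n+1) : ℝ) ≤ 1 := by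
    intro n
    rw [div_le_one (K_cast_pos _)]
    exact_mod_cast f3_le _
  have hlim : Tendsto (fun n : ℕ => 1 - 1 / (K (6*n) : ℝ)) atTop (nhds 1) := by
    have := (one_div_K_tendsto (b := fun n => 6*n)
      (tendsto_atTop_mono (fun n => by simp only [id]; omega) tendsto_id)).const_sub 1
    simpa using this
  exact tendsto_of_tendsto_of_tendsto_of_le_of_le hlim tendsto_const_nhds hlow hhigh

lemma part2' {l : ℕ} (h2 : 2 ≤ l) (h5 : l ≤ 5) :
    Tendsto (fun n : ℕ => (f3 (K (6 * n + l)) : ℝ) / (K (6 * n + l) : ℝ))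
      atTop (nhds 0) := by
  apply tendsto_zero_of_bounds (b := fun n => 6*n+1) (c := fun n => 6*n+l)
  · exact tendsto_atTop_mono (fun n => by simp only [id]; omega) tendsto_id
  · exact Eventually.of_forall fun n => ⟨by omega, f3_K_upper (by omega) h5⟩

lemma part2_zero :
    Tendsto (fun n : ℕ => (f3 (K (6 * n + 0)) : ℝ) / (K (6 * n + 0) : ℝ))
      atTop (nhds 0) := by
  apply tendsto_zero_of_bounds (b := fun n => 6*(n-1)+1) (c := fun n => 6*n+0)
  · exact tendsto_atTop_mono (fun n => by simp only [id]; omega) tendsto_id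
  · filter_upwards [eventually_ge_atTop 1] with n hn
    refine ⟨by omega, ?_⟩
    have h6 : 6*n+0 = 6*((n-1)+1) := by omega
    rw [h6]
    exact f3_K_upper0 _

theorem f3_ratio_limits :
    Filter.Tendsto (fun n : ℕ => (f3 (K (6 * n + 1)) : ℝ) / (K (6 * n + 1) : ℝ))
      Filter.atTop (nhds 1) ∧
    ∀ l ∈ ({0, 2, 3, 4, 5} : Set ℕ),
      Filter.Tendsto (fun n : ℕ => (f3 (K (6 * n + l)) : ℝ) / (K (6 * n + l) : ℝ))
        Filter.atTop (nhds 0) := by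
  refine ⟨part1, ?_⟩
  intro l hl
  simp only [Set.mem_insert_iff, Set.mem_singleton_iff] at hl
  rcases hl with rfl | rfl | rfl | rfl | rfl
  · exact part2_zero
  · exact part2' (by norm_num) (by norm_num)
  · exact part2' (by norm_num) (by norm_num)
  · exact part2' (by norm_num) (by norm_num)
  · exact part2' (by norm_num) (by norm_num)
end
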